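/- Let I : ℝ² → ℝ be integrable, let a, β, α ∈ ℝ, Δt > 0, w > 0, let W be the indicator function of [−w/2, w/2]², and set Ī = ∫_{ℝ²} I. Suppose K_n, K_{n+1} : ℝ² → ℝ are integrable and satisfy the discretized linearized gradient descent update K_{n+1} = K_n − Δt·[ (a/2)·( Ī·W + β·((K_n ⋆ I) ⋆ I) ) + α·K_n ]. Then for every ω ∈ ℝ², the Fourier transforms satisfy K̂_{n+1}(ω) = A(ω)·K̂_n(ω) − (a/2)·Δt·Ī·Ŵ(ω), where the amplifier is A(ω) = 1 − Δt·(α + (1/2)·a·β·|Î(ω)|²) and Ŵ is the Fourier transform of W. -/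

import Mathlib

open MeasureTheory FourierTransform
open scoped RealInnerProductSpace

/-- The cross-correlation `(f ⋆ g)(z) = ∫_{ℝ²} f(x)·g(x + z) dx`. -/
noncomputable def crossCorr (f g : EuclideanSpace ℝ (Fin 2) → ℝ)
    (z : EuclideanSpace ℝ (Fin 2)) : ℝ :=
  ∫ x : EuclideanSpace ℝ (Fin 2), f x * g (x + z)

abbrev V2 := EuclideanSpace ℝ (Fin 2)

lemma cc_prod_integrable {f g : V2 → ℝ} (hf : Integrable f) (hg : Integrable g) :
    Integrable (Function.uncurry fun z x => f x * g (x + z))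
      ((volume : Measure V2).prod volume) :=
  ((measurePreserving_prod_add_swap (volume : Measure V2) volume).integrable_comp
    (hf.mul_prod hg).aestronglyMeasurable).2 (hf.mul_prod hg)

lemma cc_integrable {f g : V2 → ℝ} (hf : Integrable f) (hg : Integrable g) :
    Integrable (crossCorr f g) :=
  (cc_prod_integrable hf hg).integral_prod_left

lemma fourier_crossCorr {f g : V2 → ℝ} (hf : Integrable f) (hg : Integrable g) (ω : V2) :
    𝓕 (fun z => (crossCorr f g z : ℂ)) ω =
      𝓕 (fun x => (f x : ℂ)) (-ω) * 𝓕 (fun x => (g x : ℂ)) ω := by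
  have hchar : Continuous fun p : V2 × V2 => ((𝐞 (-⟪p.1, ω⟫) : Circle) : ℂ) := by
    apply continuous_subtype_val.comp
    exact Real.continuous_fourierChar.comp ((continuous_fst.inner continuous_const).neg)
  have hFc : Integrable (Function.uncurry fun z x =>
      ((𝐞 (-⟪z, ω⟫) : Circle) : ℂ) * ((f x * g (x + z) : ℝ) : ℂ))
      ((volume : Measure V2).prod volume) := by
    apply Integrable.bdd_mul (c := 1) ((cc_prod_integrable hf hg).ofReal (𝕜 := ℂ))
      hchar.aestronglyMeasurable
    exact Filter.Eventually.of_forall fun p => (Circle.norm_coe (𝐞 (-⟪p.1, ω⟫))).le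
  rw [Real.fourier_eq]
  calc
    ∫ z, 𝐞 (-⟪z, ω⟫) • ((crossCorr f g z : ℝ) : ℂ)
        = ∫ z, ∫ x, ((𝐞 (-⟪z, ω⟫) : Circle) : ℂ) * ((f x * g (x + z) : ℝ) : ℂ) := by
          congr 1; funext z
          have h1 : ((crossCorr f g z : ℝ) : ℂ) = ∫ x, ((f x * g (x + z) : ℝ) : ℂ) :=
            (integral_ofReal).symm
          rw [h1, Circle.smul_def, smul_eq_mul, ← integral_const_mul]
    _ = ∫ x, ∫ z, ((𝐞 (-⟪z, ω⟫) : Circle) : ℂ) * ((f x * g (x + z) : ℝ) : ℂ) :=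
          integral_integral_swap hFc
    _ = ∫ x, ((𝐞 ⟪x, ω⟫ : Circle) : ℂ) * (f x : ℂ) * (𝓕 (fun y => (g y : ℂ)) ω) := by
          congr 1; funext x
          have hzeq : ∀ z, ((𝐞 (-⟪z, ω⟫) : Circle) : ℂ) * ((f x * g (x + z) : ℝ) : ℂ)
              = (f x : ℂ) * ((fun y => ((𝐞 ⟪x, ω⟫ : Circle) : ℂ) *
                  (((𝐞 (-⟪y, ω⟫) : Circle) : ℂ) * (g y : ℂ))) (x + z)) := by
            intro z
            have hch : ((𝐞 ⟪x, ω⟫ : Circle) : ℂ) * ((𝐞 (-⟪x + z, ω⟫) : Circle) : ℂ)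
                = ((𝐞 (-⟪z, ω⟫) : Circle) : ℂ) := by
              rw [← Circle.coe_mul, ← AddChar.map_add_eq_mul]
              congr 2
              rw [inner_add_left]; ring
            simp only
            rw [← hch]
            push_cast
            ring
          simp_rw [hzeq]
          rw [integral_const_mul]
          rw [integral_add_left_eq_self
            (fun y => ((𝐞 ⟪x, ω⟫ : Circle) : ℂ) * (((𝐞 (-⟪y, ω⟫) : Circle) : ℂ) * (g y : ℂ))) x]
          rw [integral_const_mul, Real.fourier_eq]
          simp_rw [Circle.smul_def, smul_eq_mul]
          ring
    _ = (∫ x, 𝐞 (-⟪x, -ω⟫) • ((f x : ℝ) : ℂ)) * 𝓕 (fun y => (g y : ℂ)) ω := by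
          rw [← integral_mul_const]
          congr 1; funext x
          rw [inner_neg_right, neg_neg, Circle.smul_def, smul_eq_mul]
    _ = 𝓕 (fun x => (f x : ℂ)) (-ω) * 𝓕 (fun y => (g y : ℂ)) ω := by
          rw [Real.fourier_eq (fun x => ((f x : ℝ) : ℂ)) (-ω)]

lemma fourier_real_neg (f : V2 → ℝ) (ω : V2) :
    𝓕 (fun x => (f x : ℂ)) (-ω) = (starRingEnd ℂ) (𝓕 (fun x => (f x : ℂ)) ω) := by
  rw [Real.fourier_eq (fun x => ((f x : ℝ) : ℂ)) (-ω), Real.fourier_eq,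
    ← integral_conj]
  congr 1; funext v
  rw [inner_neg_right, neg_neg, Circle.smul_def, Circle.smul_def, smul_eq_mul, smul_eq_mul,
    map_mul, Complex.conj_ofReal, ← Circle.coe_inv_eq_conj, ← AddChar.map_neg_eq_inv, neg_neg]

lemma fourier_add_c {f g : V2 → ℂ} (hf : Integrable f) (hg : Integrable g) (ω : V2) :
    𝓕 (fun x => f x + g x) ω = 𝓕 f ω + 𝓕 g ω := by
  rw [Real.fourier_eq, Real.fourier_eq, Real.fourier_eq, ← integral_add]
  · simp [smul_add]
  · exact (Real.fourierIntegral_convergent_iff ω).2 hf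
  · exact (Real.fourierIntegral_convergent_iff ω).2 hg

lemma fourier_const_mul_c (c : ℂ) (f : V2 → ℂ) (ω : V2) :
    𝓕 (fun x => c * f x) ω = c * 𝓕 f ω := by
  rw [Real.fourier_eq, Real.fourier_eq, ← integral_const_mul]
  congr 1; funext v
  simp_rw [Circle.smul_def, smul_eq_mul]; ring

lemma W_integrable {w : ℝ} (hw : 0 < w) :
    Integrable (Set.indicator {x : V2 | ∀ i, |x i| ≤ w / 2} fun _ => (1 : ℝ)) := by
  have hclosed : IsClosed {x : V2 | ∀ i, |x i| ≤ w / 2} := by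
    have h : {x : V2 | ∀ i, |x i| ≤ w / 2} = ⋂ i, {x : V2 | |x i| ≤ w / 2} := by
      ext x; simp [Set.mem_iInter]
    rw [h]
    exact isClosed_iInter fun i =>
      isClosed_le ((EuclideanSpace.proj (𝕜 := ℝ) i).continuous.abs) continuous_const
  have hbdd : Bornology.IsBounded {x : V2 | ∀ i, |x i| ≤ w / 2} := by
    rw [Metric.isBounded_iff_subset_closedBall 0]
    refine ⟨w, fun x hx => ?_⟩
    simp only [Metric.mem_closedBall, dist_zero_right]
    rw [EuclideanSpace.norm_eq]
    have h0 := hx 0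
    have h1 := hx 1
    have habs0 : (0:ℝ) ≤ |x 0| := abs_nonneg _
    have habs1 : (0:ℝ) ≤ |x 1| := abs_nonneg _
    have : Real.sqrt (∑ i, ‖x i‖ ^ 2) ≤ Real.sqrt (w ^ 2) := by
      apply Real.sqrt_le_sqrt
      rw [Fin.sum_univ_two]
      simp only [Real.norm_eq_abs]
      nlinarith
    calc Real.sqrt (∑ i, ‖x i‖ ^ 2) ≤ Real.sqrt (w ^ 2) := this
      _ = w := Real.sqrt_sq hw.le
  have hcompact : IsCompact {x : V2 | ∀ i, |x i| ≤ w / 2} :=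
    Metric.isCompact_of_isClosed_isBounded hclosed hbdd
  rw [integrable_indicator_iff hclosed.measurableSet]
  exact integrableOn_const hcompact.measure_lt_top.ne

/-- Fourier transform of the forward Euler discretization of the linearized CNN
gradient descent PDE: if
`K_{n+1} = K_n − Δt·[(a/2)(Ī·W + β·((K_n ⋆ I) ⋆ I)) + α·K_n]`, where `W` is the
indicator of the square `[−w/2, w/2]²` and `Ī = ∫ I`, then for every frequency `ω`,
`K̂_{n+1}(ω) = A(ω)·K̂_n(ω) − (a/2)·Δt·Ī·Ŵ(ω)` with amplifier
`A(ω) = 1 − Δt·(α + (1/2)·a·β·|Î(ω)|²)`. -/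
theorem fourier_linearized_cnn_update (I Kn Knext : EuclideanSpace ℝ (Fin 2) → ℝ)
    (a β α Δt w : ℝ) (hΔt : 0 < Δt) (hw : 0 < w)
    (hI : Integrable I) (hKn : Integrable Kn) (hKnext : Integrable Knext)
    (W : EuclideanSpace ℝ (Fin 2) → ℝ)
    (hW : W = Set.indicator {x : EuclideanSpace ℝ (Fin 2) | ∀ i, |x i| ≤ w / 2}
      (fun _ => (1 : ℝ)))
    (hupdate : Knext = fun z => Kn z -
      Δt * (a / 2 * ((∫ x, I x) * W z + β * crossCorr (crossCorr Kn I) I z) + α * Kn z)) :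
    ∀ ω : EuclideanSpace ℝ (Fin 2),
      𝓕 (fun x => (Knext x : ℂ)) ω =
        (1 - Δt * (α + 1 / 2 * a * β *
            (‖𝓕 (fun x => (I x : ℂ)) ω‖ : ℂ) ^ 2)) *
          𝓕 (fun x => (Kn x : ℂ)) ω -
        (a / 2 * Δt * (∫ x, I x)) * 𝓕 (fun x => (W x : ℂ)) ω := by
  intro ω
  have hWint : Integrable W := by rw [hW]; exact W_integrable hw
  have hcc1 : Integrable (crossCorr Kn I) := cc_integrable hKn hI
  have hcc2 : Integrable (crossCorr (crossCorr Kn I) I) := cc_integrable hcc1 hI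
  have hdecomp : (fun x => (Knext x : ℂ)) = fun x =>
      ((1 - (Δt : ℂ) * (α : ℂ)) * (Kn x : ℂ) +
        (-((Δt : ℂ) * ((a : ℂ) / 2) * ((∫ x, I x : ℝ) : ℂ))) * (W x : ℂ)) +
      (-((Δt : ℂ) * ((a : ℂ) / 2) * (β : ℂ))) * (crossCorr (crossCorr Kn I) I x : ℂ) := by
    funext x; rw [hupdate]; push_cast; ring
  rw [hdecomp]
  have h1 : Integrable (fun x => (1 - (Δt : ℂ) * (α : ℂ)) * (Kn x : ℂ)) :=
    (hKn.ofReal (𝕜 := ℂ)).const_mul _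
  have h2 : Integrable (fun x =>
      (-((Δt : ℂ) * ((a : ℂ) / 2) * ((∫ x, I x : ℝ) : ℂ))) * (W x : ℂ)) :=
    (hWint.ofReal (𝕜 := ℂ)).const_mul _
  have h3 : Integrable (fun x =>
      (-((Δt : ℂ) * ((a : ℂ) / 2) * (β : ℂ))) * (crossCorr (crossCorr Kn I) I x : ℂ)) :=
    (hcc2.ofReal (𝕜 := ℂ)).const_mul _
  have h12 : Integrable (fun x => (1 - (Δt : ℂ) * (α : ℂ)) * (Kn x : ℂ) +
      (-((Δt : ℂ) * ((a : ℂ) / 2) * ((∫ x, I x : ℝ) : ℂ))) * (W x : ℂ)) := h1.add h2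
  rw [fourier_add_c h12 h3 ω, fourier_add_c h1 h2 ω,
    fourier_const_mul_c, fourier_const_mul_c, fourier_const_mul_c,
    fourier_crossCorr hcc1 hI ω, fourier_crossCorr hKn hI (-ω), neg_neg,
    fourier_real_neg I ω]
  have habs : ((‖𝓕 (fun x => ((I x : ℝ) : ℂ)) ω‖ : ℝ) : ℂ) ^ 2 =
      𝓕 (fun x => ((I x : ℝ) : ℂ)) ω * (starRingEnd ℂ) (𝓕 (fun x => ((I x : ℝ) : ℂ)) ω) := by
    rw [← Complex.ofReal_pow, Complex.sq_norm, Complex.mul_conj]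
  rw [habs]
  push_cast
  ring
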